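/- Let X be a nonempty set and let α, β : X → X be injective full transformations. Then α ~c β in Γ(X) if and only if |A_α| + |B_α| = |A_β| + |B_β| (cardinal addition), |B_α| = |B_β|, and |C^n_α| = |C^n_β| for every integer n ≥ 1. -/

import Mathlib

namespace ConjPaper

open Classical

variable {X : Type*}

/-- Conjugacy `α ~c β` in the monoid `Γ(X)` of injective full transformations:
there are injective `φ, ψ : X → X` with `φ ∘ α = β ∘ φ` and `ψ ∘ β = α ∘ ψ`. -/
def ConjInj (α β : X → X) : Prop :=
  ∃ φ ψ : X → X, Function.Injective φ ∧ Function.Injective ψ ∧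
    φ ∘ α = β ∘ φ ∧ ψ ∘ β = α ∘ ψ

/-- The component equivalence: `x ≈_α y` iff `α^k(x) = α^m(y)` for some `k, m ≥ 0`. -/
def relT (α : X → X) (x y : X) : Prop := ∃ k m : ℕ, α^[k] x = α^[m] y

/-- `Y` is an `≈_α`-class. -/
def IsClass (α : X → X) (Y : Set X) : Prop := ∃ x0, Y = {y | relT α y x0}

/-- `A_α`: the set of right-ray classes of `α`, i.e. classes containing a point
outside `im(α)`. -/
def Aset (α : X → X) : Set (Set X) :=
  {Y | IsClass α Y ∧ ∃ x ∈ Y, x ∉ Set.range α}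

/-- `B_α`: the set of double-ray classes of `α`, i.e. classes containing no periodic
point and no point outside `im(α)`. -/
def Bset (α : X → X) : Set (Set X) :=
  {Y | IsClass α Y ∧ (∀ x ∈ Y, ∀ n, 1 ≤ n → α^[n] x ≠ x) ∧ ∀ x ∈ Y, x ∈ Set.range α}

/-- `C_α^n`: the set of cycle classes of `α` of length `n`, i.e. classes of size `n`
each of whose points `x` satisfies `α^n(x) = x` and `α^i(x) ≠ x` for `1 ≤ i < n`. -/
def Cset (α : X → X) (n : ℕ) : Set (Set X) :=
  {Y | IsClass α Y ∧ Y.ncard = n ∧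
    ∀ x ∈ Y, α^[n] x = x ∧ ∀ i, 1 ≤ i → i < n → α^[i] x ≠ x}

universe u

def Mdl (A B : Type u) (C : ℕ → Type u) : Type u :=
  (A × ℕ) ⊕ ((B × ℤ) ⊕ (Σ n : ℕ, C n × ZMod (n+1)))

variable {A B : Type u} {C : ℕ → Type u}

def sh : Mdl A B C → Mdl A B C
  | .inl (a, k) => .inl (a, k+1)
  | .inr (.inl (b, z)) => .inr (.inl (b, z+1))
  | .inr (.inr ⟨n, c, i⟩) => .inr (.inr ⟨n, c, i+1⟩)

/-- inclusion of the right-ray part -/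
def ι1 (a : A) (k : ℕ) : Mdl A B C := Sum.inl (a, k)
/-- inclusion of the double-ray part -/
def ι2 (b : B) (z : ℤ) : Mdl A B C := Sum.inr (Sum.inl (b, z))
/-- inclusion of the cycle part -/
def ι3 (n : ℕ) (c : C n) (i : ZMod (n+1)) : Mdl A B C := Sum.inr (Sum.inr ⟨n, c, i⟩)

lemma sh_iter_inl (a : A) (k : ℕ) : ∀ t : ℕ, sh^[t] (ι1 a k : Mdl A B C) = ι1 a (k+t)
  | 0 => rfl
  | t+1 => by
      rw [Function.iterate_succ_apply', sh_iter_inl a k t]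
      show ι1 a (k+t+1) = _
      rw [add_assoc]

lemma sh_iter_inr1 (b : B) (z : ℤ) : ∀ t : ℕ,
    sh^[t] (ι2 b z : Mdl A B C) = ι2 b (z+t)
  | 0 => by simp [ι2, id]; rfl
  | t+1 => by
      rw [Function.iterate_succ_apply', sh_iter_inr1 b z t]
      show (ι2 b (z+t+1) : Mdl A B C) = _
      push_cast
      rw [add_assoc]

lemma sh_iter_inr2 (n : ℕ) (c : C n) (i : ZMod (n+1)) : ∀ t : ℕ,
    sh^[t] (ι3 n c i : Mdl A B C) = ι3 n c (i+t)
  | 0 => by simp [ι3, id]; rfl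
  | t+1 => by
      rw [Function.iterate_succ_apply', sh_iter_inr2 n c i t]
      show (ι3 n c (i+t+1) : Mdl A B C) = _
      push_cast [add_assoc]
      rfl

section Forward
variable {A' B' : Type u} {C' : ℕ → Type u}
variable {φ : Mdl A B C → Mdl A' B' C'}

lemma phi_iter (hc : ∀ x, φ (sh x) = sh (φ x)) (t : ℕ) (x : Mdl A B C) :
    φ (sh^[t] x) = sh^[t] (φ x) := by
  induction t with
  | zero => rfl
  | succ t ih => rw [Function.iterate_succ_apply', Function.iterate_succ_apply', hc, ih]

/-- the image of a cycle component is a full cycle component of the same length -/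
lemma cyc_target (hφ : Function.Injective φ) (hc : ∀ x, φ (sh x) = sh (φ x))
    (n : ℕ) (c : C n) :
    ∃ c' : C' n, ∀ j : ZMod (n+1), ∃ i, φ (ι3 n c i) = ι3 n c' j := by
  have hy : sh^[n+1] (φ (ι3 n c 0)) = φ (ι3 n c 0) := by
    rw [← phi_iter hc, sh_iter_inr2]
    congr 1
    simp
  rcases hY : φ (ι3 n c 0) with ⟨a', k⟩ | ⟨b', z⟩ | ⟨m, c', j⟩
  · rw [hY] at hy
    rw [show (Sum.inl (a', k) : Mdl A' B' C') = ι1 a' k from rfl, sh_iter_inl] at hy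
    injection hy with h
    injection h with h1 h2
    omega
  · rw [hY] at hy
    rw [show (Sum.inr (Sum.inl (b', z)) : Mdl A' B' C') = ι2 b' z from rfl, sh_iter_inr1] at hy
    injection hy with h
    injection h with h
    injection h with h1 h2
    omega
  · rw [hY] at hy
    rw [show (Sum.inr (Sum.inr ⟨m, c', j⟩) : Mdl A' B' C') = ι3 m c' j from rfl,
      sh_iter_inr2] at hy
    injection hy with h
    injection h with h
    rw [Sigma.mk.inj_iff, heq_eq_eq] at h
    have hz : ((n+1:ℕ) : ZMod (m+1)) = 0 := by
      have h2 := (Prod.ext_iff.mp h.2).2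
      rwa [add_eq_left] at h2
    have hdvd : (m+1) ∣ (n+1) := (ZMod.natCast_eq_zero_iff _ _).mp hz
    have hmle : m + 1 ≤ n + 1 := Nat.le_of_dvd (Nat.succ_pos n) hdvd
    have hg : ∀ i : ZMod (n+1), φ (ι3 n c i) = ι3 m c' (j + ((i.val : ℕ) : ZMod (m+1))) := by
      intro i
      have h1 : sh^[i.val] (ι3 n c 0 : Mdl A B C) = ι3 n c i := by
        rw [sh_iter_inr2, zero_add]
        congr 1
        simp [ZMod.natCast_val, ZMod.cast_id]
      calc φ (ι3 n c i) = φ (sh^[i.val] (ι3 n c 0)) := by rw [h1]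
        _ = sh^[i.val] (φ (ι3 n c 0)) := phi_iter hc _ _
        _ = _ := by
              rw [hY, show (Sum.inr (Sum.inr ⟨m, c', j⟩) : Mdl A' B' C') = ι3 m c' j from rfl,
                sh_iter_inr2]
    have hginj : Function.Injective (fun i : ZMod (n+1) => j + ((i.val : ℕ) : ZMod (m+1))) := by
      intro i1 i2 h12
      have e : φ (ι3 n c i1) = φ (ι3 n c i2) := by
        rw [hg i1, hg i2]
        exact congrArg (ι3 m c') h12
      have h := hφ e
      injection h with h
      injection h with h
      rw [Sigma.mk.inj_iff, heq_eq_eq] at h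
      exact (Prod.ext_iff.mp h.2).2
    have hcard : n + 1 ≤ m + 1 := by
      simpa using Fintype.card_le_of_injective _ hginj
    have hm : m = n := by omega
    subst hm
    refine ⟨c', fun j' => ?_⟩
    obtain ⟨i, hi⟩ := Finite.surjective_of_injective hginj j'
    exact ⟨i, (hg i).trans (congrArg (ι3 m c') hi)⟩

/-- the image of a double-ray component is a full double-ray component -/
lemma ray2_target (hφ : Function.Injective φ) (hc : ∀ x, φ (sh x) = sh (φ x))
    (b : B) :
    ∃ b' : B', ∀ w : ℤ, ∃ z, φ (ι2 b z) = ι2 b' w := by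
  rcases hY : φ (ι2 b 0) with ⟨a', k⟩ | ⟨b', z0⟩ | ⟨m, c', j⟩
  · -- impossible: double ray cannot go to a right ray
    exfalso
    have h1 : sh^[k+1] (ι2 b (-(k+1)) : Mdl A B C) = ι2 b 0 := by
      rw [sh_iter_inr1]
      push_cast
      ring_nf
    have h2 : sh^[k+1] (φ (ι2 b (-(k+1)))) = Sum.inl (a', k) := by
      rw [← phi_iter hc, h1, hY]
    rcases hx : φ (ι2 b (-(k+1))) with ⟨a'', t⟩ | ⟨b'', w⟩ | ⟨m, c'', j⟩
    · rw [hx, show (Sum.inl (a'', t) : Mdl A' B' C') = ι1 a'' t from rfl, sh_iter_inl] at h2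
      injection h2 with h
      injection h with h1 h2
      omega
    · rw [hx, show (Sum.inr (Sum.inl (b'', w)) : Mdl A' B' C') = ι2 b'' w from rfl,
        sh_iter_inr1] at h2
      exact absurd h2 (by simp [ι2])
    · rw [hx, show (Sum.inr (Sum.inr ⟨m, c'', j⟩) : Mdl A' B' C') = ι3 m c'' j from rfl,
        sh_iter_inr2] at h2
      exact absurd h2 (by simp [ι3])
  · -- the good case
    have key : ∀ z : ℤ, φ (ι2 b z) = ι2 b' (z0 + z) := by
      intro z
      rcases le_or_gt 0 z with hz | hz
      · have h1 : sh^[z.toNat] (ι2 b 0 : Mdl A B C) = ι2 b z := by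
          rw [sh_iter_inr1, zero_add, Int.toNat_of_nonneg hz]
        have := phi_iter hc z.toNat (ι2 b 0)
        rw [h1, hY, show (Sum.inr (Sum.inl (b', z0)) : Mdl A' B' C') = ι2 b' z0 from rfl,
          sh_iter_inr1, Int.toNat_of_nonneg hz] at this
        exact this
      · set t : ℕ := (-z).toNat with ht
        have htz : (t : ℤ) = -z := Int.toNat_of_nonneg (by omega)
        have h1 : sh^[t] (ι2 b z : Mdl A B C) = ι2 b 0 := by
          rw [sh_iter_inr1, htz]
          ring_nf
        have h2 : sh^[t] (φ (ι2 b z)) = ι2 b' z0 := by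
          rw [← phi_iter hc, h1, hY]
          rfl
        rcases hx : φ (ι2 b z) with ⟨a'', s⟩ | ⟨b'', w⟩ | ⟨m, c'', j⟩
        · rw [hx, show (Sum.inl (a'', s) : Mdl A' B' C') = ι1 a'' s from rfl,
            sh_iter_inl] at h2
          exact absurd h2 (by simp [ι1, ι2])
        · rw [hx, show (Sum.inr (Sum.inl (b'', w)) : Mdl A' B' C') = ι2 b'' w from rfl,
            sh_iter_inr1] at h2
          injection h2 with h
          injection h with h
          injection h with hb hw
          subst hb
          have hwz : w = z0 + z := by omega
          rw [hwz]
          rfl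
        · exfalso
          rw [hx, show (Sum.inr (Sum.inr ⟨m, c'', j⟩) : Mdl A' B' C') = ι3 m c'' j from rfl,
            sh_iter_inr2] at h2
          injection h2 with h
          injection h
    exact ⟨b', fun w => ⟨w - z0, by rw [key (w - z0)]; congr 1; ring⟩⟩
  · -- impossible: double ray cannot go to a cycle
    exfalso
    have h1 : sh^[m+1] (ι2 b 0 : Mdl A B C) = ι2 b ((m+1 : ℕ) : ℤ) := by
      rw [sh_iter_inr1, zero_add]
    have h3 : φ (ι2 b ((m+1 : ℕ) : ℤ)) = φ (ι2 b 0) := by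
      have := phi_iter hc (m+1) (ι2 b 0)
      rw [h1, hY, show (Sum.inr (Sum.inr ⟨m, c', j⟩) : Mdl A' B' C') = ι3 m c' j from rfl,
        sh_iter_inr2] at this
      rw [this, hY]
      show (ι3 m c' (j + ((m+1:ℕ) : ZMod (m+1))) : Mdl A' B' C') = ι3 m c' j
      congr 1
      simp
    have := hφ h3
    injection this with h
    injection h with h
    injection h with hb hz
    omega

/-- target data for a right-ray component -/
lemma ray1_target (hc : ∀ x, φ (sh x) = sh (φ x)) (hφ : Function.Injective φ) (a : A) :
    (∃ a' : A', ∃ k0 : ℕ, ∀ k : ℕ, φ (ι1 a k) = ι1 a' (k0 + k)) ∨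
    (∃ b' : B', ∃ z0 : ℤ, ∀ k : ℕ, φ (ι1 a k) = ι2 b' (z0 + k)) := by
  rcases hY : φ (ι1 a 0) with ⟨a', k0⟩ | ⟨b', z0⟩ | ⟨m, c', j⟩
  · left
    refine ⟨a', k0, fun k => ?_⟩
    have h1 : sh^[k] (ι1 a 0 : Mdl A B C) = ι1 a k := by rw [sh_iter_inl, zero_add]
    have := phi_iter hc k (ι1 a 0)
    rwa [h1, hY, show (Sum.inl (a', k0) : Mdl A' B' C') = ι1 a' k0 from rfl,
      sh_iter_inl] at this
  · right
    refine ⟨b', z0, fun k => ?_⟩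
    have h1 : sh^[k] (ι1 a 0 : Mdl A B C) = ι1 a k := by rw [sh_iter_inl, zero_add]
    have := phi_iter hc k (ι1 a 0)
    rwa [h1, hY, show (Sum.inr (Sum.inl (b', z0)) : Mdl A' B' C') = ι2 b' z0 from rfl,
      sh_iter_inr1] at this
  · exfalso
    have h1 : sh^[m+1] (ι1 a 0 : Mdl A B C) = ι1 a (m+1) := by rw [sh_iter_inl, zero_add]
    have h2 : φ (ι1 a (m+1)) = φ (ι1 a 0) := by
      have := phi_iter hc (m+1) (ι1 a 0)
      rw [h1, hY, show (Sum.inr (Sum.inr ⟨m, c', j⟩) : Mdl A' B' C') = ι3 m c' j from rfl,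
        sh_iter_inr2] at this
      rw [this, hY]
      show (ι3 m c' (j + ((m+1:ℕ) : ZMod (m+1))) : Mdl A' B' C') = ι3 m c' j
      congr 1
      simp
    have := hφ h2
    injection this with h
    injection h with ha hk
    omega

lemma model_card_le (hφ : Function.Injective φ) (hc : ∀ x, φ (sh x) = sh (φ x)) :
    (Cardinal.mk A + Cardinal.mk B ≤ Cardinal.mk A' + Cardinal.mk B') ∧
    Cardinal.mk B ≤ Cardinal.mk B' ∧ ∀ n, Cardinal.mk (C n) ≤ Cardinal.mk (C' n) := by
  choose mb hmb using ray2_target (φ := φ) hφ hc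
  have mb_inj : Function.Injective mb := by
    intro b1 b2 h
    obtain ⟨z1, hz1⟩ := hmb b1 0
    obtain ⟨z2, hz2⟩ := hmb b2 0
    rw [h] at hz1
    have := hφ (hz1.trans hz2.symm)
    injection this with h'
    injection h' with h'
    injection h' with hb hz
    all_goals exact hb
  have hCn : ∀ n, Cardinal.mk (C n) ≤ Cardinal.mk (C' n) := by
    intro n
    choose mc hmc using cyc_target (φ := φ) hφ hc n
    have mc_inj : Function.Injective mc := by
      intro c1 c2 h
      obtain ⟨i1, hi1⟩ := hmc c1 0
      obtain ⟨i2, hi2⟩ := hmc c2 0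
      rw [h] at hi1
      have := hφ (hi1.trans hi2.symm)
      injection this with h'
      injection h' with h'
      rw [Sigma.mk.inj_iff, heq_eq_eq] at h'
      exact (Prod.ext_iff.mp h'.2).1
    exact Cardinal.mk_le_of_injective mc_inj
  refine ⟨?_, Cardinal.mk_le_of_injective mb_inj, hCn⟩
  -- the class map on right-ray and double-ray parts
  have hA : ∀ a : A, ∃ t : A' ⊕ B',
      (∃ a' k0, t = Sum.inl a' ∧ ∀ k : ℕ, φ (ι1 a k) = ι1 a' (k0 + k)) ∨
      (∃ b' z0, t = Sum.inr b' ∧ ∀ k : ℕ, φ (ι1 a k) = ι2 b' (z0 + k)) := by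
    intro a
    rcases ray1_target (φ := φ) hc hφ a with ⟨a', k0, hf⟩ | ⟨b', z0, hf⟩
    · exact ⟨Sum.inl a', Or.inl ⟨a', k0, rfl, hf⟩⟩
    · exact ⟨Sum.inr b', Or.inr ⟨b', z0, rfl, hf⟩⟩
  choose ta hta using hA
  set G : A ⊕ B → A' ⊕ B' := Sum.elim ta (fun b => Sum.inr (mb b)) with hG
  have hGinj : Function.Injective G := by
    rintro (a1 | b1) (a2 | b2) h
    · -- both right rays
      rcases hta a1 with ⟨a1', k01, ht1, hf1⟩ | ⟨b1', z01, ht1, hf1⟩ <;>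
        rcases hta a2 with ⟨a2', k02, ht2, hf2⟩ | ⟨b2', z02, ht2, hf2⟩
      · simp only [hG, Sum.elim_inl, ht1, ht2, Sum.inl.injEq] at h
        subst h
        have e : φ (ι1 a1 k02) = φ (ι1 a2 k01) := by
          rw [hf1 k02, hf2 k01, add_comm k01 k02]
        have := hφ e
        injection this with h'
        injection h' with h1 h2
        rw [h1]
      · simp only [hG, Sum.elim_inl, ht1, ht2] at h
        exact absurd h (by simp)
      · simp only [hG, Sum.elim_inl, ht1, ht2] at h
        exact absurd h (by simp)
      · simp only [hG, Sum.elim_inl, ht1, ht2, Sum.inr.injEq] at h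
        subst h
        -- two right rays into one double ray: forward orbits intersect
        rcases le_total z01 z02 with hz | hz
        · have e : φ (ι1 a1 (z02 - z01).toNat) = φ (ι1 a2 0) := by
            rw [hf1 _, hf2 0]
            congr 1
            omega
          have := hφ e
          injection this with h'
          injection h' with h1 h2
          rw [h1]
        · have e : φ (ι1 a1 0) = φ (ι1 a2 (z01 - z02).toNat) := by
            rw [hf1 0, hf2 _]
            congr 1
            omega
          have := hφ e
          injection this with h'
          injection h' with h1 h2
          rw [h1]
    · -- right ray vs double ray : impossible collision
      exfalso
      rcases hta a1 with ⟨a1', k01, ht1, hf1⟩ | ⟨b1', z01, ht1, hf1⟩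
      · simp only [hG, Sum.elim_inl, Sum.elim_inr, ht1] at h
        exact absurd h (by simp)
      · simp only [hG, Sum.elim_inl, Sum.elim_inr, ht1, Sum.inr.injEq] at h
        obtain ⟨z, hz⟩ := hmb b2 (z01 + 0)
        rw [← h] at hz
        have e : φ (ι1 a1 0) = φ (ι2 b2 z) := by
          rw [hf1 0, hz]
          norm_num
        have := hφ e
        injection this
    · exfalso
      rcases hta a2 with ⟨a2', k02, ht2, hf2⟩ | ⟨b2', z02, ht2, hf2⟩
      · simp only [hG, Sum.elim_inl, Sum.elim_inr, ht2] at h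
        exact absurd h (by simp)
      · simp only [hG, Sum.elim_inl, Sum.elim_inr, ht2, Sum.inr.injEq] at h
        obtain ⟨z, hz⟩ := hmb b1 (z02 + 0)
        rw [h] at hz
        have e : φ (ι1 a2 0) = φ (ι2 b1 z) := by
          rw [hf2 0, hz]
          norm_num
        have := hφ e
        injection this
    · simp only [hG, Sum.elim_inr, Sum.inr.injEq] at h
      rw [mb_inj h]
  have := Cardinal.mk_le_of_injective hGinj
  rwa [Cardinal.mk_sum, Cardinal.mk_sum, Cardinal.lift_id, Cardinal.lift_id,
    Cardinal.lift_id, Cardinal.lift_id] at this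

end Forward

section Backward
variable {A' B' : Type u} {C' : ℕ → Type u}

lemma exists_G (h1 : Cardinal.mk A + Cardinal.mk B ≤ Cardinal.mk A' + Cardinal.mk B')
    (h2 : Cardinal.mk B ≤ Cardinal.mk B') :
    ∃ G : A ⊕ B → A' ⊕ B', Function.Injective G ∧
      ∀ b : B, ∃ b', G (Sum.inr b) = Sum.inr b' := by
  obtain ⟨j⟩ := (Cardinal.le_def _ _).mp h2
  rcases lt_or_ge (Cardinal.mk B') Cardinal.aleph0 with hfin | hinf
  · -- finite bound
    set S : Set B' := (Set.range j)ᶜ with hS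
    have hmk : Cardinal.mk B + Cardinal.mk S = Cardinal.mk B' := by
      rw [← Cardinal.mk_range_eq j j.injective]
      exact Cardinal.mk_sum_compl _
    have hBfin : Cardinal.mk B < Cardinal.aleph0 := h2.trans_lt hfin
    have hA : Cardinal.mk A ≤ Cardinal.mk A' + Cardinal.mk S := by
      have h1' : Cardinal.mk A + Cardinal.mk B ≤
          (Cardinal.mk A' + Cardinal.mk S) + Cardinal.mk B := by
        calc Cardinal.mk A + Cardinal.mk B ≤ Cardinal.mk A' + Cardinal.mk B' := h1
          _ = (Cardinal.mk A' + Cardinal.mk S) + Cardinal.mk B := by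
              rw [← hmk]; ring
      exact (Cardinal.add_le_add_iff_of_lt_aleph0 hBfin).mp h1'
    have hA2 : Cardinal.mk A ≤ Cardinal.mk (A' ⊕ ↥S) := by
      rw [Cardinal.mk_sum]
      simp only [Cardinal.lift_id]
      exact hA
    obtain ⟨f⟩ := (Cardinal.le_def _ _).mp hA2
    refine ⟨Sum.elim
        (fun a => Sum.elim (fun a' => Sum.inl a') (fun s => Sum.inr s.1) (f a))
        (fun b => Sum.inr (j b)), ?_, fun b => ⟨j b, rfl⟩⟩
    rintro (a1 | b1) (a2 | b2) h
    · rcases hf1 : f a1 with a1' | s1 <;> rcases hf2 : f a2 with a2' | s2 <;>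
        simp only [Sum.elim_inl, Sum.elim_inr] at h <;> rw [hf1, hf2] at h
      · injection h with h
        subst h
        rw [f.injective (hf1.trans hf2.symm)]
      · injection h
      · injection h
      · injection h with h
        have : s1 = s2 := Subtype.ext h
        subst this
        rw [f.injective (hf1.trans hf2.symm)]
    · exfalso
      rcases hf1 : f a1 with a1' | s1 <;>
        simp only [Sum.elim_inl, Sum.elim_inr] at h <;> rw [hf1] at h
      · injection h
      · injection h with h
        exact s1.2 ⟨b2, h.symm⟩
    · exfalso
      rcases hf2 : f a2 with a2' | s2 <;>
        simp only [Sum.elim_inl, Sum.elim_inr] at h <;> rw [hf2] at h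
      · injection h
      · injection h with h
        exact s2.2 ⟨b1, h⟩
    · simp only [Sum.elim_inr] at h
      injection h with h
      rw [j.injective h]
  · -- infinite B'
    have hBB : Cardinal.mk (B' ⊕ B') = Cardinal.mk B' := by
      rw [Cardinal.mk_sum]
      simp only [Cardinal.lift_id]
      exact Cardinal.add_eq_self hinf
    obtain ⟨E⟩ := Cardinal.eq.mp hBB
    have hA : Cardinal.mk A ≤ Cardinal.mk (A' ⊕ B') := by
      rw [Cardinal.mk_sum]
      simp only [Cardinal.lift_id]
      exact le_trans (self_le_add_right _ _) h1
    obtain ⟨f⟩ := (Cardinal.le_def _ _).mp hA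
    refine ⟨Sum.elim
        (fun a => Sum.elim (fun a' => Sum.inl a') (fun b' => Sum.inr (E (Sum.inl b'))) (f a))
        (fun b => Sum.inr (E (Sum.inr (j b)))), ?_, fun b => ⟨E (Sum.inr (j b)), rfl⟩⟩
    rintro (a1 | b1) (a2 | b2) h
    · rcases hf1 : f a1 with a1' | s1 <;> rcases hf2 : f a2 with a2' | s2 <;>
        simp only [Sum.elim_inl, Sum.elim_inr] at h <;> rw [hf1, hf2] at h
      · injection h with h
        subst h
        rw [f.injective (hf1.trans hf2.symm)]
      · injection h
      · injection h
      · injection h with h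
        have := E.injective h
        injection this with h'
        subst h'
        rw [f.injective (hf1.trans hf2.symm)]
    · exfalso
      rcases hf1 : f a1 with a1' | s1 <;>
        simp only [Sum.elim_inl, Sum.elim_inr] at h <;> rw [hf1] at h
      · injection h
      · injection h with h
        exact absurd (E.injective h) (by simp)
    · exfalso
      rcases hf2 : f a2 with a2' | s2 <;>
        simp only [Sum.elim_inl, Sum.elim_inr] at h <;> rw [hf2] at h
      · injection h
      · injection h with h
        exact absurd (E.injective h) (by simp)
    · simp only [Sum.elim_inr] at h
      injection h with h
      rw [j.injective (Sum.inr.inj (E.injective h))]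

lemma exists_model_hom (G : A ⊕ B → A' ⊕ B') (hG : Function.Injective G)
    (hGB : ∀ b : B, ∃ b', G (Sum.inr b) = Sum.inr b')
    (e : ∀ n, C n → C' n) (he : ∀ n, Function.Injective (e n)) :
    ∃ φ : Mdl A B C → Mdl A' B' C', Function.Injective φ ∧ ∀ x, φ (sh x) = sh (φ x) := by
  choose gb hgb using hGB
  set F : Mdl A B C → Mdl A' B' C' := fun x =>
    match x with
    | .inl (a, k) => Sum.elim (fun a' => ι1 a' k) (fun b' => ι2 b' (k : ℤ)) (G (Sum.inl a))
    | .inr (.inl (b, z)) => ι2 (gb b) z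
    | .inr (.inr ⟨n, c, i⟩) => ι3 n (e n c) i
    with hF
  have FA : ∀ a k, F (ι1 a k) =
      Sum.elim (fun a' => ι1 a' k) (fun b' => ι2 b' (k : ℤ)) (G (Sum.inl a)) := fun _ _ => rfl
  refine ⟨F, ?_, ?_⟩
  · rintro (⟨a1, k1⟩ | ⟨b1, z1⟩ | ⟨n1, c1, i1⟩) (⟨a2, k2⟩ | ⟨b2, z2⟩ | ⟨n2, c2, i2⟩) h
    · rw [show (Sum.inl (a1, k1) : Mdl A B C) = ι1 a1 k1 from rfl,
        show (Sum.inl (a2, k2) : Mdl A B C) = ι1 a2 k2 from rfl, FA, FA] at h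
      rcases hg1 : G (Sum.inl a1) with a1' | b1' <;> rcases hg2 : G (Sum.inl a2) with a2' | b2' <;>
        rw [hg1, hg2] at h <;> simp only [Sum.elim_inl, Sum.elim_inr] at h
      · injection h with h
        injection h with ha hk
        subst hk
        have := hG (hg1.trans (ha ▸ hg2.symm))
        injection this with h'
        rw [h']
      · injection h
      · injection h
      · injection h with h
        injection h with h
        injection h with hb hk
        have hk' : k1 = k2 := by exact_mod_cast hk
        subst hk'
        have := hG (hg1.trans (hb ▸ hg2.symm))
        injection this with h'
        rw [h']
    · exfalso
      rw [show (Sum.inl (a1, k1) : Mdl A B C) = ι1 a1 k1 from rfl, FA] at h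
      rcases hg1 : G (Sum.inl a1) with a1' | b1' <;> rw [hg1] at h <;>
        simp only [Sum.elim_inl, Sum.elim_inr] at h
      · injection h
      · injection h with h
        injection h with h
        injection h with hb hz
        have := hG (hg1.trans (hb ▸ (hgb b2).symm))
        injection this
    · exfalso
      rw [show (Sum.inl (a1, k1) : Mdl A B C) = ι1 a1 k1 from rfl, FA] at h
      rcases hg1 : G (Sum.inl a1) with a1' | b1' <;> rw [hg1] at h <;>
        simp only [Sum.elim_inl, Sum.elim_inr] at h
      · injection h
      · injection h with h
        injection h
    · exfalso
      rw [show (Sum.inl (a2, k2) : Mdl A B C) = ι1 a2 k2 from rfl, FA] at h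
      rcases hg2 : G (Sum.inl a2) with a2' | b2' <;> rw [hg2] at h <;>
        simp only [Sum.elim_inl, Sum.elim_inr] at h
      · injection h
      · injection h with h
        injection h with h
        injection h with hb hz
        have := hG (hg2.trans (hb ▸ (hgb b1).symm))
        injection this
    · have h' : (ι2 (gb b1) z1 : Mdl A' B' C') = ι2 (gb b2) z2 := h
      injection h' with h'
      injection h' with h'
      injection h' with hb hz
      subst hz
      have := hG ((hgb b1).trans (hb ▸ (hgb b2).symm))
      injection this with h'
      rw [h']
    · exfalso
      have h' : (ι2 (gb b1) z1 : Mdl A' B' C') = ι3 n2 (e n2 c2) i2 := h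
      injection h' with h'
      injection h'
    · exfalso
      rw [show (Sum.inl (a2, k2) : Mdl A B C) = ι1 a2 k2 from rfl, FA] at h
      rcases hg2 : G (Sum.inl a2) with a2' | b2' <;> rw [hg2] at h <;>
        simp only [Sum.elim_inl, Sum.elim_inr] at h
      · injection h
      · injection h with h
        injection h
    · exfalso
      have h' : (ι3 n1 (e n1 c1) i1 : Mdl A' B' C') = ι2 (gb b2) z2 := h
      injection h' with h'
      injection h'
    · have h' : (ι3 n1 (e n1 c1) i1 : Mdl A' B' C') = ι3 n2 (e n2 c2) i2 := h
      injection h' with h'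
      injection h' with h'
      rw [Sigma.mk.inj_iff] at h'
      obtain ⟨hn, hci⟩ := h'
      subst hn
      rw [heq_eq_eq] at hci
      injection hci with hc hi
      rw [he n1 hc, hi]
  · rintro (⟨a, k⟩ | ⟨b, z⟩ | ⟨n, c, i⟩)
    · show F (ι1 a (k+1)) = sh (F (ι1 a k))
      rw [FA, FA]
      rcases hg : G (Sum.inl a) with a' | b' <;>
        simp only [Sum.elim_inl, Sum.elim_inr]
      · rfl
      · show (ι2 b' ((k+1 : ℕ) : ℤ) : Mdl A' B' C') = ι2 b' ((k : ℤ) + 1)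
        congr 1 <;> push_cast <;> ring
    · rfl
    · rfl
  
end Backward

section Structure
variable {X : Type u} {α : X → X}

lemma relT_refl (α : X → X) (x : X) : relT α x x := ⟨0, 0, rfl⟩

lemma relT_symm {x y : X} (h : relT α x y) : relT α y x := by
  obtain ⟨k, m, h⟩ := h
  exact ⟨m, k, h.symm⟩

lemma relT_trans {x y z : X} (h1 : relT α x y) (h2 : relT α y z) : relT α x z := by
  obtain ⟨k, m, h1⟩ := h1
  obtain ⟨k', m', h2⟩ := h2
  refine ⟨k' + k, m + m', ?_⟩
  calc α^[k' + k] x = α^[k'] (α^[k] x) := Function.iterate_add_apply α k' k x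
    _ = α^[k'] (α^[m] y) := by rw [h1]
    _ = α^[m] (α^[k'] y) := by
        rw [← Function.iterate_add_apply, ← Function.iterate_add_apply, add_comm]
    _ = α^[m] (α^[m'] z) := by rw [h2]
    _ = α^[m + m'] z := (Function.iterate_add_apply α m m' z).symm

/-- the `≈_α` class of a point -/
def cls (α : X → X) (x0 : X) : Set X := {y | relT α y x0}

lemma mem_cls_self (α : X → X) (x : X) : x ∈ cls α x := relT_refl α x

lemma cls_eq_of_mem {x y : X} (h : y ∈ cls α x) : cls α y = cls α x :=
  Set.ext fun _ => ⟨fun hz => relT_trans hz h, fun hz => relT_trans hz (relT_symm h)⟩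

lemma class_eq_cls {Y : Set X} (hY : IsClass α Y) {x : X} (hx : x ∈ Y) : Y = cls α x := by
  obtain ⟨x0, rfl⟩ := hY
  exact (cls_eq_of_mem hx).symm

lemma class_eq_class {Y1 Y2 : Set X} (h1 : IsClass α Y1) (h2 : IsClass α Y2) {x : X}
    (hx1 : x ∈ Y1) (hx2 : x ∈ Y2) : Y1 = Y2 :=
  (class_eq_cls h1 hx1).trans (class_eq_cls h2 hx2).symm

lemma iterate_mem_cls {x y : X} (h : y ∈ cls α x) (k : ℕ) : α^[k] y ∈ cls α x :=
  relT_trans ⟨0, k, rfl⟩ h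

lemma cancel (hα : Function.Injective α) {u v : X} {k m : ℕ} (hkm : k ≤ m)
    (h : α^[k] u = α^[m] v) : u = α^[m - k] v := by
  apply hα.iterate k
  rw [h, ← Function.iterate_add_apply]
  congr 1
  omega

lemma iter_mod {x : X} {p : ℕ} (hp : α^[p] x = x) (q : ℕ) : α^[q] x = α^[q % p] x := by
  conv_lhs => rw [← Nat.div_add_mod q p]
  rw [add_comm, Function.iterate_add_apply, Function.iterate_mul, Function.iterate_fixed hp]

lemma offRange_inj (hα : Function.Injective α) {xs : X} (hxs : xs ∉ Set.range α)
    {i j : ℕ} (h : α^[i] xs = α^[j] xs) : i = j := by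
  have key : ∀ {i j : ℕ}, i ≤ j → α^[i] xs = α^[j] xs → i = j := by
    intro i j hij h
    have h2 := cancel hα hij h
    by_contra hne
    apply hxs
    refine ⟨α^[j - i - 1] xs, ?_⟩
    calc α (α^[j - i - 1] xs) = α^[j - i - 1 + 1] xs :=
          (Function.iterate_succ_apply' α _ xs).symm
      _ = α^[j - i] xs := by congr 1; omega
      _ = xs := h2.symm
  rcases le_total i j with h' | h'
  · exact key h' h
  · exact (key h' h.symm).symm

lemma offRange_orbit (hα : Function.Injective α) {xs : X} (hxs : xs ∉ Set.range α)
    {y : X} (h : relT α y xs) : ∃ k, y = α^[k] xs := by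
  obtain ⟨k, m, hkm⟩ := h
  rcases le_total k m with h' | h'
  · exact ⟨m - k, cancel hα h' hkm⟩
  · have h2 := cancel hα h' hkm.symm
    rcases Nat.eq_zero_or_pos (k - m) with h0 | h0
    · refine ⟨0, ?_⟩
      rw [h0] at h2
      simpa using h2.symm
    · exfalso
      apply hxs
      refine ⟨α^[k - m - 1] y, ?_⟩
      calc α (α^[k - m - 1] y) = α^[k - m - 1 + 1] y :=
            (Function.iterate_succ_apply' α _ y).symm
        _ = α^[k - m] y := by congr 1; omega
        _ = xs := h2.symm

lemma periodic_orbit (hα : Function.Injective α) {x0 : X} {d : ℕ} (hd : 0 < d)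
    (hfix : α^[d] x0 = x0) {y : X} (h : relT α y x0) : ∃ j, j < d ∧ y = α^[j] x0 := by
  obtain ⟨k, m, hkm⟩ := h
  have hbig : α^[k] y = α^[m + k * d] x0 := by
    rw [Function.iterate_add_apply, show k * d = d * k from Nat.mul_comm k d,
      Function.iterate_mul, Function.iterate_fixed hfix]
    exact hkm
  have hk : k ≤ m + k * d := by
    have : k ≤ k * d := Nat.le_mul_of_pos_right k hd
    omega
  have h2 := cancel hα hk hbig
  refine ⟨(m + k * d - k) % d, Nat.mod_lt _ hd, ?_⟩
  rw [h2, iter_mod hfix]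

lemma cyc_inj (hα : Function.Injective α) {x0 : X} {n : ℕ} (hfix : α^[n+1] x0 = x0)
    (hmin : ∀ i, 1 ≤ i → i < n+1 → α^[i] x0 ≠ x0)
    {i j : ℕ} (hi : i < n+1) (hj : j < n+1) (h : α^[i] x0 = α^[j] x0) : i = j := by
  have key : ∀ {i j : ℕ}, i ≤ j → j < n+1 → α^[i] x0 = α^[j] x0 → i = j := by
    intro i j hij hjlt h
    have h2 := cancel hα hij h
    by_contra hne
    exact hmin (j - i) (by omega) (by omega) h2.symm
  rcases le_total i j with h' | h'
  · exact key h' hj h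
  · exact (key h' hi h.symm).symm

lemma mem_range_of_C {Y : Set X} {n : ℕ} (hY : Y ∈ Cset α (n+1)) {x : X} (hx : x ∈ Y) :
    x ∈ Set.range α := by
  have h := (hY.2.2 x hx).1
  exact ⟨α^[n] x, (Function.iterate_succ_apply' α n x).symm.trans h⟩

lemma AB_ne {Y1 Y2 : Set X} (h1 : Y1 ∈ Aset α) (h2 : Y2 ∈ Bset α) : Y1 ≠ Y2 := by
  rintro rfl
  obtain ⟨x, hx, hxr⟩ := h1.2
  exact hxr (h2.2.2 x hx)

lemma AC_ne {Y1 Y2 : Set X} {n : ℕ} (h1 : Y1 ∈ Aset α) (h2 : Y2 ∈ Cset α (n+1)) :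
    Y1 ≠ Y2 := by
  rintro rfl
  obtain ⟨x, hx, hxr⟩ := h1.2
  exact hxr (mem_range_of_C h2 hx)

lemma BC_ne {Y1 Y2 : Set X} {n : ℕ} (h1 : Y1 ∈ Bset α) (h2 : Y2 ∈ Cset α (n+1)) :
    Y1 ≠ Y2 := by
  rintro rfl
  have hne : Y1.Nonempty := by
    apply Set.nonempty_of_ncard_ne_zero
    rw [h2.2.1]
    omega
  obtain ⟨x, hx⟩ := hne
  exact h1.2.1 x hx (n+1) (by omega) ((h2.2.2 x hx).1)

lemma CC_ne {Y1 Y2 : Set X} {n m : ℕ} (h1 : Y1 ∈ Cset α (n+1)) (h2 : Y2 ∈ Cset α (m+1))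
    (hnm : n ≠ m) : Y1 ≠ Y2 := by
  rintro rfl
  have := h1.2.1.symm.trans h2.2.1
  omega

lemma trichotomy (hα : Function.Injective α) (x : X) :
    (cls α x ∈ Aset α) ∨ (cls α x ∈ Bset α) ∨ ∃ n, cls α x ∈ Cset α (n+1) := by
  classical
  by_cases hper : ∃ y ∈ cls α x, ∃ p, 0 < p ∧ α^[p] y = y
  · right; right
    obtain ⟨y, hy, hp⟩ := hper
    set d := Nat.find hp with hd
    have hdspec : 0 < d ∧ α^[d] y = y := Nat.find_spec hp
    have hy' : cls α y = cls α x := cls_eq_of_mem hy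
    have horb : ∀ z ∈ cls α x, ∃ j, j < d ∧ z = α^[j] y := by
      intro z hz
      rw [← hy'] at hz
      exact periodic_orbit hα hdspec.1 hdspec.2 hz
    have hminy : ∀ i, 1 ≤ i → i < d → α^[i] y ≠ y := by
      intro i h1 h2 hcon
      exact Nat.find_min hp h2 ⟨by omega, hcon⟩
    refine ⟨d - 1, ?_⟩
    have hd1 : d - 1 + 1 = d := by omega
    rw [hd1]
    refine ⟨⟨x, rfl⟩, ?_, ?_⟩
    · have hset : cls α x = ↑((Finset.range d).image (fun j => α^[j] y)) := by
        ext z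
        simp only [Finset.coe_image, Finset.coe_range, Set.mem_image, Set.mem_Iio]
        constructor
        · intro hz
          obtain ⟨j, hj, hzj⟩ := horb z hz
          exact ⟨j, hj, hzj.symm⟩
        · rintro ⟨j, hj, rfl⟩
          rw [← hy']
          exact iterate_mem_cls (mem_cls_self α y) j
      rw [hset, Set.ncard_coe_finset, Finset.card_image_of_injOn, Finset.card_range]
      intro i hi j hj hij
      simp only [Finset.coe_range, Set.mem_Iio] at hi hj
      have key : ∀ {i j : ℕ}, i ≤ j → j < d → α^[i] y = α^[j] y → i = j := by
        intro i j h1 h2 h3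
        have h4 := cancel hα h1 h3
        by_contra hne
        exact hminy (j - i) (by omega) (by omega) h4.symm
      rcases le_total i j with h' | h'
      · exact key h' hj hij
      · exact (key h' hi hij.symm).symm
    · intro z hz
      obtain ⟨j, hj, rfl⟩ := horb z hz
      constructor
      · calc α^[d] (α^[j] y) = α^[j] (α^[d] y) := by
              rw [← Function.iterate_add_apply, ← Function.iterate_add_apply, add_comm]
          _ = α^[j] y := by rw [hdspec.2]
      · intro i hi1 hid h
        have hcomm : α^[i] (α^[j] y) = α^[j] (α^[i] y) := by
          rw [← Function.iterate_add_apply, ← Function.iterate_add_apply, add_comm]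
        rw [hcomm] at h
        have h2 : α^[i] y = y := hα.iterate j h
        exact hminy i hi1 hid h2
  · push_neg at hper
    by_cases hoff : ∃ z ∈ cls α x, z ∉ Set.range α
    · left
      exact ⟨⟨x, rfl⟩, hoff⟩
    · right; left
      push_neg at hoff
      refine ⟨⟨x, rfl⟩, ?_, hoff⟩
      intro z hz p hp hcon
      exact hper z hz p (by omega) hcon

theorem exists_structure (hα : Function.Injective α) :
    ∃ e : X ≃ Mdl ↥(Aset α) ↥(Bset α) (fun n => ↥(Cset α (n+1))),
      ∀ x, e (α x) = sh (e x) := by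
  classical
  -- distinguished points of right-ray classes
  have hApt : ∀ Y : ↥(Aset α), ∃ x, x ∈ Y.1 ∧ x ∉ Set.range α := fun Y => Y.2.2
  choose pa hpa1 hpa2 using hApt
  -- base points of double-ray classes
  have hBpt : ∀ Y : ↥(Bset α), ∃ x, x ∈ Y.1 := by
    intro Y
    obtain ⟨x0, h⟩ := Y.2.1
    exact ⟨x0, by rw [h]; exact relT_refl α x0⟩
  choose bb hbb using hBpt
  -- base points of cycle classes
  have hCpt : ∀ n (Y : ↥(Cset α (n+1))), ∃ x, x ∈ Y.1 := by
    intro n Y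
    obtain ⟨x0, h⟩ := Y.2.1
    exact ⟨x0, by rw [h]; exact relT_refl α x0⟩
  choose cc hcc using hCpt
  -- the permutation induced by α on a double-ray class
  have hBperm : ∀ Y : ↥(Bset α), ∃ σ : Equiv.Perm ↥Y.1, ∀ p : ↥Y.1, (σ p).1 = α p.1 := by
    intro Y
    have hmem : ∀ p : ↥Y.1, α p.1 ∈ Y.1 := by
      intro p
      have hc : (Y : Set X) = cls α p.1 := class_eq_cls Y.2.1 p.2
      have hm : α p.1 ∈ cls α p.1 := iterate_mem_cls (mem_cls_self α p.1) 1
      rwa [← hc] at hm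
    refine ⟨Equiv.ofBijective (fun p => ⟨α p.1, hmem p⟩) ⟨?_, ?_⟩, fun p => rfl⟩
    · intro p q h
      exact Subtype.ext (hα (congrArg Subtype.val h))
    · rintro ⟨y, hy⟩
      obtain ⟨x, hxy⟩ := Y.2.2.2 y hy
      have hx : x ∈ Y.1 := by
        rw [class_eq_cls Y.2.1 hy]
        exact ⟨1, 0, by simpa using hxy⟩
      exact ⟨⟨x, hx⟩, Subtype.ext hxy⟩
  choose σB hσB using hBperm
  -- powers of the permutation compute iterates of α
  have hpow : ∀ (Y : ↥(Bset α)) (k : ℕ) (p : ↥Y.1), ((σB Y ^ k) p).1 = α^[k] p.1 := by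
    intro Y k
    induction k with
    | zero => intro p; simp
    | succ k ih =>
        intro p
        have : (σB Y ^ (k+1)) p = (σB Y ^ k) (σB Y p) := by
          rw [pow_succ, Equiv.Perm.mul_apply]
        rw [this, ih (σB Y p), hσB Y p, Function.iterate_succ_apply]
  have hzpow : ∀ (Y : ↥(Bset α)) (k : ℕ) (p : ↥Y.1), ((σB Y ^ (k:ℤ)) p).1 = α^[k] p.1 := by
    intro Y k p
    rw [zpow_natCast]
    exact hpow Y k p
  -- no positive power of σB fixes the base point
  have hBnofix : ∀ (Y : ↥(Bset α)) (d : ℤ), 0 < d →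
      (σB Y ^ d) ⟨bb Y, hbb Y⟩ ≠ ⟨bb Y, hbb Y⟩ := by
    intro Y d hd heq
    have hdt : ((d.toNat : ℕ) : ℤ) = d := Int.toNat_of_nonneg (by omega)
    rw [← hdt] at heq
    have hval := congrArg Subtype.val heq
    rw [hzpow Y d.toNat] at hval
    exact Y.2.2.1 (bb Y) (hbb Y) d.toNat (by omega) hval
  have hBinj : ∀ (Y : ↥(Bset α)) (z1 z2 : ℤ),
      (σB Y ^ z1) ⟨bb Y, hbb Y⟩ = (σB Y ^ z2) ⟨bb Y, hbb Y⟩ → z1 = z2 := by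
    intro Y z1 z2 h
    have hgen : ∀ w : ℤ, (σB Y ^ w) ⟨bb Y, hbb Y⟩ = ⟨bb Y, hbb Y⟩ → w = 0 := by
      intro w hw
      by_contra hw0
      rcases lt_or_gt_of_ne hw0 with hneg | hpos
      · have h2 : (σB Y ^ (-w)) ⟨bb Y, hbb Y⟩ = ⟨bb Y, hbb Y⟩ := by
          conv_lhs => rw [← hw]
          rw [← Equiv.Perm.mul_apply, ← zpow_add]
          simp
        exact hBnofix Y (-w) (by omega) h2
      · exact hBnofix Y w hpos hw
    have h4 := hgen (z1 - z2) (by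
      have h3 := congrArg (fun p => (σB Y ^ (-z2 : ℤ)) p) h
      rw [← Equiv.Perm.mul_apply, ← Equiv.Perm.mul_apply, ← zpow_add, ← zpow_add] at h3
      rw [show -z2 + z1 = z1 - z2 by ring, show -z2 + z2 = 0 by ring, zpow_zero] at h3
      simpa using h3)
    omega
  have hBsurj : ∀ (Y : ↥(Bset α)) (y : X), y ∈ Y.1 →
      ∃ z : ℤ, ((σB Y ^ z) ⟨bb Y, hbb Y⟩).1 = y := by
    intro Y y hy
    have hrel : relT α y (bb Y) := by
      have hYc := class_eq_cls Y.2.1 (hbb Y)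
      rw [hYc] at hy
      exact hy
    obtain ⟨k, m, hkm⟩ := hrel
    refine ⟨(m : ℤ) - k, ?_⟩
    have h1 : (σB Y ^ (k:ℤ)) ⟨y, hy⟩ = (σB Y ^ (m:ℤ)) ⟨bb Y, hbb Y⟩ := by
      apply Subtype.ext
      rw [hzpow, hzpow]
      exact hkm
    have h2 : (σB Y ^ ((m:ℤ) - k)) ⟨bb Y, hbb Y⟩ = ⟨y, hy⟩ := by
      have h3 := congrArg (fun p => (σB Y ^ (-(k:ℤ))) p) h1
      rw [← Equiv.Perm.mul_apply, ← Equiv.Perm.mul_apply, ← zpow_add, ← zpow_add] at h3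
      rw [show -(k:ℤ) + k = 0 by ring, zpow_zero, show -(k:ℤ) + m = (m:ℤ) - k by ring] at h3
      simpa using h3.symm
    rw [h2]
  have hCsurj : ∀ n (Y : ↥(Cset α (n+1))) (y : X), y ∈ Y.1 →
      ∃ j, j < n+1 ∧ y = α^[j] (cc n Y) := by
    intro n Y y hy
    have hrel : relT α y (cc n Y) := by
      rw [class_eq_cls Y.2.1 (hcc n Y)] at hy
      exact hy
    exact periodic_orbit hα (by omega) (Y.2.2.2 (cc n Y) (hcc n Y)).1 hrel
  -- the parametrization map
  let H : Mdl ↥(Aset α) ↥(Bset α) (fun n => ↥(Cset α (n+1))) → X := fun m =>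
    match m with
    | .inl (Y, k) => α^[k] (pa Y)
    | .inr (.inl (Y, z)) => ((σB Y ^ z) ⟨bb Y, hbb Y⟩).1
    | .inr (.inr ⟨n, Y, i⟩) => α^[i.val] (cc n Y)
  have hHA : ∀ (Y : ↥(Aset α)) (k : ℕ), α^[k] (pa Y) ∈ Y.1 := by
    intro Y k
    rw [class_eq_cls Y.2.1 (hpa1 Y)]
    exact iterate_mem_cls (mem_cls_self α (pa Y)) k
  have hHC : ∀ n (Y : ↥(Cset α (n+1))) (i : ZMod (n+1)), α^[i.val] (cc n Y) ∈ Y.1 := by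
    intro n Y i
    rw [class_eq_cls Y.2.1 (hcc n Y)]
    exact iterate_mem_cls (mem_cls_self α (cc n Y)) _
  have hbij : Function.Bijective H := by
    constructor
    · rintro (⟨Y1, k1⟩ | ⟨Y1, z1⟩ | ⟨n1, Y1, i1⟩) (⟨Y2, k2⟩ | ⟨Y2, z2⟩ | ⟨n2, Y2, i2⟩) h
      · have h' : α^[k1] (pa Y1) = α^[k2] (pa Y2) := h
        have hcls : Y1.1 = Y2.1 :=
          class_eq_class Y1.2.1 Y2.2.1 (hHA Y1 k1) (by rw [h']; exact hHA Y2 k2)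
        have hYY : Y1 = Y2 := Subtype.ext hcls
        subst hYY
        rw [offRange_inj hα (hpa2 Y1) h']
      · exfalso
        have h' : α^[k1] (pa Y1) = ((σB Y2 ^ z2) ⟨bb Y2, hbb Y2⟩).1 := h
        have hcls : Y1.1 = Y2.1 :=
          class_eq_class Y1.2.1 Y2.2.1 (hHA Y1 k1)
            (by rw [h']; exact ((σB Y2 ^ z2) ⟨bb Y2, hbb Y2⟩).2)
        exact AB_ne Y1.2 Y2.2 hcls
      · exfalso
        have h' : α^[k1] (pa Y1) = α^[i2.val] (cc n2 Y2) := h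
        have hcls : Y1.1 = Y2.1 :=
          class_eq_class Y1.2.1 Y2.2.1 (hHA Y1 k1) (by rw [h']; exact hHC n2 Y2 i2)
        exact AC_ne Y1.2 Y2.2 hcls
      · exfalso
        have h' : ((σB Y1 ^ z1) ⟨bb Y1, hbb Y1⟩).1 = α^[k2] (pa Y2) := h
        have hcls : Y2.1 = Y1.1 :=
          class_eq_class Y2.2.1 Y1.2.1 (hHA Y2 k2)
            (by rw [← h']; exact ((σB Y1 ^ z1) ⟨bb Y1, hbb Y1⟩).2)
        exact AB_ne Y2.2 Y1.2 hcls
      · have h' : ((σB Y1 ^ z1) ⟨bb Y1, hbb Y1⟩).1 = ((σB Y2 ^ z2) ⟨bb Y2, hbb Y2⟩).1 := h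
        have hcls : Y1.1 = Y2.1 :=
          class_eq_class Y1.2.1 Y2.2.1 ((σB Y1 ^ z1) ⟨bb Y1, hbb Y1⟩).2
            (by rw [h']; exact ((σB Y2 ^ z2) ⟨bb Y2, hbb Y2⟩).2)
        have hYY : Y1 = Y2 := Subtype.ext hcls
        subst hYY
        rw [hBinj Y1 z1 z2 (Subtype.ext h')]
      · exfalso
        have h' : ((σB Y1 ^ z1) ⟨bb Y1, hbb Y1⟩).1 = α^[i2.val] (cc n2 Y2) := h
        have hcls : Y1.1 = Y2.1 :=
          class_eq_class Y1.2.1 Y2.2.1 ((σB Y1 ^ z1) ⟨bb Y1, hbb Y1⟩).2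
            (by rw [h']; exact hHC n2 Y2 i2)
        exact BC_ne Y1.2 Y2.2 hcls
      · exfalso
        have h' : α^[i1.val] (cc n1 Y1) = α^[k2] (pa Y2) := h
        have hcls : Y2.1 = Y1.1 :=
          class_eq_class Y2.2.1 Y1.2.1 (hHA Y2 k2) (by rw [← h']; exact hHC n1 Y1 i1)
        exact AC_ne Y2.2 Y1.2 hcls
      · exfalso
        have h' : α^[i1.val] (cc n1 Y1) = ((σB Y2 ^ z2) ⟨bb Y2, hbb Y2⟩).1 := h
        have hcls : Y2.1 = Y1.1 :=
          class_eq_class Y2.2.1 Y1.2.1 ((σB Y2 ^ z2) ⟨bb Y2, hbb Y2⟩).2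
            (by rw [← h']; exact hHC n1 Y1 i1)
        exact BC_ne Y2.2 Y1.2 hcls
      · have h' : α^[i1.val] (cc n1 Y1) = α^[i2.val] (cc n2 Y2) := h
        have hcls : Y1.1 = Y2.1 :=
          class_eq_class Y1.2.1 Y2.2.1 (hHC n1 Y1 i1) (by rw [h']; exact hHC n2 Y2 i2)
        have hnn : n1 = n2 := by
          have e1 := Y1.2.2.1
          have e2 := Y2.2.2.1
          rw [hcls] at e1
          omega
        subst hnn
        have hYY : Y1 = Y2 := Subtype.ext hcls
        subst hYY
        have hfix := (Y1.2.2.2 (cc n1 Y1) (hcc n1 Y1)).1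
        have hmin := (Y1.2.2.2 (cc n1 Y1) (hcc n1 Y1)).2
        have hii : i1.val = i2.val :=
          cyc_inj hα hfix hmin (ZMod.val_lt i1) (ZMod.val_lt i2) h'
        rw [ZMod.val_injective _ hii]
    · intro x
      rcases trichotomy hα x with hx | hx | ⟨n, hx⟩
      · set Y : ↥(Aset α) := ⟨cls α x, hx⟩ with hY
        have h1 : (cls α x) = cls α (pa Y) := class_eq_cls ⟨x, rfl⟩ (hpa1 Y)
        have hx' : x ∈ cls α (pa Y) := h1 ▸ mem_cls_self α x
        obtain ⟨k, hk⟩ := offRange_orbit hα (hpa2 Y) hx'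
        exact ⟨Sum.inl (Y, k), hk.symm⟩
      · set Y : ↥(Bset α) := ⟨cls α x, hx⟩ with hY
        obtain ⟨z, hz⟩ := hBsurj Y x (mem_cls_self α x)
        exact ⟨Sum.inr (Sum.inl (Y, z)), hz⟩
      · set Y : ↥(Cset α (n+1)) := ⟨cls α x, hx⟩ with hY
        obtain ⟨j, hj, hjx⟩ := hCsurj n Y x (mem_cls_self α x)
        refine ⟨Sum.inr (Sum.inr ⟨n, Y, (j : ZMod (n+1))⟩), ?_⟩
        show α^[((j : ZMod (n+1))).val] (cc n Y) = x
        rw [ZMod.val_cast_of_lt hj]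
        exact hjx.symm
  have heq : ∀ m, H (sh m) = α (H m) := by
    rintro (⟨Y, k⟩ | ⟨Y, z⟩ | ⟨n, Y, i⟩)
    · exact Function.iterate_succ_apply' α k (pa Y)
    · show ((σB Y ^ (z+1)) ⟨bb Y, hbb Y⟩).1 = α ((σB Y ^ z) ⟨bb Y, hbb Y⟩).1
      have hstep : (σB Y ^ (z+1)) ⟨bb Y, hbb Y⟩ = σB Y ((σB Y ^ z) ⟨bb Y, hbb Y⟩) := by
        rw [add_comm, zpow_add, zpow_one, Equiv.Perm.mul_apply]
      rw [hstep, hσB]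
    · show α^[(i+1).val] (cc n Y) = α (α^[i.val] (cc n Y))
      have hfix := (Y.2.2.2 (cc n Y) (hcc n Y)).1
      have hv : (i+1).val = (i.val + 1) % (n+1) := by
        rw [ZMod.val_add, ZMod.val_one_eq_one_mod]
        conv_rhs => rw [Nat.add_mod]
        rw [Nat.mod_eq_of_lt (ZMod.val_lt i)]
      calc α^[(i+1).val] (cc n Y) = α^[(i.val + 1) % (n+1)] (cc n Y) := by rw [hv]
        _ = α^[i.val + 1] (cc n Y) := (iter_mod hfix _).symm
        _ = α (α^[i.val] (cc n Y)) := Function.iterate_succ_apply' α _ _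
  set E := Equiv.ofBijective H hbij with hE
  refine ⟨E.symm, fun x => ?_⟩
  apply E.injective
  have h1 : E (E.symm (α x)) = α x := E.apply_symm_apply _
  have h2 : E (sh (E.symm x)) = α x := by
    have h3 : E (sh (E.symm x)) = H (sh (E.symm x)) := rfl
    rw [h3, heq (E.symm x)]
    have h4 : H (E.symm x) = E (E.symm x) := rfl
    rw [h4, E.apply_symm_apply]
  rw [h1, h2]

end Structure

section Transfer
variable {X M1 M2 : Type u} {α β : X → X} {s1 : M1 → M1} {s2 : M2 → M2}

lemma push_conj (e1 : X ≃ M1) (e2 : X ≃ M2)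
    (he1 : ∀ x, e1 (α x) = s1 (e1 x)) (he2 : ∀ x, e2 (β x) = s2 (e2 x))
    (φ : X → X) (hφi : Function.Injective φ) (hφc : φ ∘ α = β ∘ φ) :
    ∃ φM : M1 → M2, Function.Injective φM ∧ ∀ m, φM (s1 m) = s2 (φM m) := by
  refine ⟨fun m => e2 (φ (e1.symm m)), ?_, ?_⟩
  · intro m1 m2 h
    have := e1.symm.injective (hφi (e2.injective h))
    exact this
  · intro m
    have h1 : e1.symm (s1 m) = α (e1.symm m) := by
      apply e1.injective
      rw [Equiv.apply_symm_apply, he1, Equiv.apply_symm_apply]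
    show e2 (φ (e1.symm (s1 m))) = s2 (e2 (φ (e1.symm m)))
    rw [h1]
    have h2 : φ (α (e1.symm m)) = β (φ (e1.symm m)) := congrFun hφc (e1.symm m)
    rw [h2, he2]

lemma pull_conj (e1 : X ≃ M1) (e2 : X ≃ M2)
    (he1 : ∀ x, e1 (α x) = s1 (e1 x)) (he2 : ∀ x, e2 (β x) = s2 (e2 x))
    (φM : M1 → M2) (hφMi : Function.Injective φM) (hφMc : ∀ m, φM (s1 m) = s2 (φM m)) :
    ∃ φ : X → X, Function.Injective φ ∧ φ ∘ α = β ∘ φ := by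
  refine ⟨fun x => e2.symm (φM (e1 x)), ?_, ?_⟩
  · intro x1 x2 h
    exact e1.injective (hφMi (e2.symm.injective h))
  · funext x
    show e2.symm (φM (e1 (α x))) = β (e2.symm (φM (e1 x)))
    rw [he1, hφMc]
    apply e2.injective
    rw [Equiv.apply_symm_apply, he2, Equiv.apply_symm_apply]

end Transfer


/-- Theorem 7.6. For injective full transformations `α, β` of a
nonempty set `X`: `α ~c β` in `Γ(X)` iff `|A_α| + |B_α| = |A_β| + |B_β|`,
`|B_α| = |B_β|`, and `|C_α^n| = |C_β^n|` for all `n ≥ 1`. -/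
theorem conjInj_iff (X : Type*) [Nonempty X] (α β : X → X)
    (hα : Function.Injective α) (hβ : Function.Injective β) :
    ConjInj α β ↔
      (Cardinal.mk (Aset α) + Cardinal.mk (Bset α) =
        Cardinal.mk (Aset β) + Cardinal.mk (Bset β)) ∧
      Cardinal.mk (Bset α) = Cardinal.mk (Bset β) ∧
      ∀ n : ℕ, 1 ≤ n → Cardinal.mk (Cset α n) = Cardinal.mk (Cset β n) := by
  obtain ⟨eα, heα⟩ := exists_structure hα
  obtain ⟨eβ, heβ⟩ := exists_structure hβ
  constructor
  · rintro ⟨φ, ψ, hφi, hψi, hφc, hψc⟩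
    obtain ⟨φM, hφMi, hφMc⟩ := push_conj eα eβ heα heβ φ hφi hφc
    obtain ⟨ψM, hψMi, hψMc⟩ := push_conj eβ eα heβ heα ψ hψi hψc
    obtain ⟨hle1, hle2, hle3⟩ := model_card_le hφMi hφMc
    obtain ⟨hge1, hge2, hge3⟩ := model_card_le hψMi hψMc
    refine ⟨le_antisymm hle1 hge1, le_antisymm hle2 hge2, ?_⟩
    intro n hn
    have hn1 : n - 1 + 1 = n := by omega
    rw [← hn1]
    exact le_antisymm (hle3 (n-1)) (hge3 (n-1))
  · rintro ⟨h1, h2, h3⟩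
    obtain ⟨G, hGi, hGB⟩ := exists_G (le_of_eq h1) (le_of_eq h2)
    have hCemb : ∀ n, ∃ f : ↥(Cset α (n+1)) → ↥(Cset β (n+1)), Function.Injective f := by
      intro n
      obtain ⟨f⟩ := (Cardinal.le_def _ _).mp (le_of_eq (h3 (n+1) (by omega)))
      exact ⟨f, f.injective⟩
    choose ec hec using hCemb
    obtain ⟨φM, hφMi, hφMc⟩ := exists_model_hom G hGi hGB ec hec
    obtain ⟨φ, hφi, hφc⟩ := pull_conj eα eβ heα heβ φM hφMi hφMc
    obtain ⟨G', hGi', hGB'⟩ := exists_G (le_of_eq h1.symm) (le_of_eq h2.symm)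
    have hCemb' : ∀ n, ∃ f : ↥(Cset β (n+1)) → ↥(Cset α (n+1)), Function.Injective f := by
      intro n
      obtain ⟨f⟩ := (Cardinal.le_def _ _).mp (le_of_eq (h3 (n+1) (by omega)).symm)
      exact ⟨f, f.injective⟩
    choose ec' hec' using hCemb'
    obtain ⟨ψM, hψMi, hψMc⟩ := exists_model_hom G' hGi' hGB' ec' hec'
    obtain ⟨ψ, hψi, hψc⟩ := pull_conj eβ eα heβ heα ψM hψMi hψMc
    exact ⟨φ, ψ, hφi, hψi, hφc, hψc⟩


end ConjPaper
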